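/- If A = BC where A, B, C are symmetric 0-1 matrices with zero diagonal (adjacency matrices of graphs G, H, K on the same vertex set), then for every vertex v, deg_G(v) = deg_H(v) · deg_K(v), i.e., the row sum of A at v equals the product of the row sums of B and C at v. -/
import Mathlib


open SimpleGraph Matrix

section Aux

variable {n : ℕ} (G H K : SimpleGraph (Fin n))
    [DecidableRel G.Adj] [DecidableRel H.Adj] [DecidableRel K.Adj]

lemma aux_nonneg (i j : Fin n) : (0 : ℝ) ≤ G.adjMatrix ℝ i j := by
  by_cases h : G.Adj i j <;> simp [h]

lemma aux_entry (hfac : G.adjMatrix ℝ = H.adjMatrix ℝ * K.adjMatrix ℝ) (v j : Fin n) :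
    G.adjMatrix ℝ v j = ∑ k, H.adjMatrix ℝ v k * K.adjMatrix ℝ k j := by
  rw [hfac]; exact Matrix.mul_apply

lemma aux_walk_adj (hfac : G.adjMatrix ℝ = H.adjMatrix ℝ * K.adjMatrix ℝ)
    {v k j : Fin n} (h1 : H.Adj v k) (h2 : K.Adj k j) : G.Adj v j := by
  by_contra hG
  have he := aux_entry G H K hfac v j
  have h0 : G.adjMatrix ℝ v j = 0 := by simp [hG]
  have hle : (1 : ℝ) ≤ ∑ k', H.adjMatrix ℝ v k' * K.adjMatrix ℝ k' j := by
    have : H.adjMatrix ℝ v k * K.adjMatrix ℝ k j = 1 := by simp [h1, h2]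
    calc (1 : ℝ) = H.adjMatrix ℝ v k * K.adjMatrix ℝ k j := this.symm
    _ ≤ _ := Finset.single_le_sum (f := fun k' => H.adjMatrix ℝ v k' * K.adjMatrix ℝ k' j)
        (fun i _ => mul_nonneg (aux_nonneg H v i) (aux_nonneg K i j)) (Finset.mem_univ k)
  rw [← he, h0] at hle
  linarith

lemma aux_walk_unique (hfac : G.adjMatrix ℝ = H.adjMatrix ℝ * K.adjMatrix ℝ)
    {v k k' j : Fin n} (h1 : H.Adj v k) (h2 : K.Adj k j)
    (h1' : H.Adj v k') (h2' : K.Adj k' j) : k = k' := by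
  by_contra hkk
  have he := aux_entry G H K hfac v j
  have hub : G.adjMatrix ℝ v j ≤ 1 := by by_cases h : G.Adj v j <;> simp [h]
  have h2le : (2 : ℝ) ≤ ∑ t, H.adjMatrix ℝ v t * K.adjMatrix ℝ t j := by
    have hpair : ∑ t ∈ ({k, k'} : Finset (Fin n)), H.adjMatrix ℝ v t * K.adjMatrix ℝ t j
        = 2 := by
      rw [Finset.sum_pair hkk]; simp [h1, h2, h1', h2']; norm_num
    calc (2 : ℝ) = _ := hpair.symm
    _ ≤ _ := Finset.sum_le_sum_of_subset_of_nonneg (Finset.subset_univ _)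
        (fun i _ _ => mul_nonneg (aux_nonneg H v i) (aux_nonneg K i j))
  rw [← he] at h2le
  linarith

lemma aux_walk_exists (hfac : G.adjMatrix ℝ = H.adjMatrix ℝ * K.adjMatrix ℝ)
    {v j : Fin n} (h : G.Adj v j) : ∃ k, H.Adj v k ∧ K.Adj k j := by
  by_contra hno
  push_neg at hno
  have he := aux_entry G H K hfac v j
  have h1 : G.adjMatrix ℝ v j = 1 := by simp [h]
  have h0 : ∑ k, H.adjMatrix ℝ v k * K.adjMatrix ℝ k j = 0 := by
    apply Finset.sum_eq_zero
    intro k _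
    by_cases hH : H.Adj v k
    · have := hno k hH
      simp [this]
    · simp [hH]
  rw [h1, h0] at he
  exact one_ne_zero he

lemma aux_deg_sum (v : Fin n) :
    (G.degree v : ℝ) = ∑ j, G.adjMatrix ℝ v j := by
  rw [SimpleGraph.degree, SimpleGraph.neighborFinset_eq_filter]
  simp only [SimpleGraph.adjMatrix_apply]
  rw [Finset.sum_boole]

end Aux

theorem stmt1 {n : ℕ} (G H K : SimpleGraph (Fin n))
    [DecidableRel G.Adj] [DecidableRel H.Adj] [DecidableRel K.Adj]
    (hfac : G.adjMatrix ℝ = H.adjMatrix ℝ * K.adjMatrix ℝ) (v : Fin n) :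
    G.degree v = H.degree v * K.degree v := by
  classical
  -- pointwise inequality via an injection N_G(w) ↪ N_H(w) × N_K(w)
  have hle : ∀ w : Fin n, G.degree w ≤ H.degree w * K.degree w := by
    intro w
    set φ : Fin n → Fin n × Fin n := fun j =>
      if h : G.Adj w j then
        ((aux_walk_exists G H K hfac h).choose,
         (aux_walk_exists G H K hfac h.symm).choose)
      else (v, v) with hφ
    have hmaps : ∀ j ∈ G.neighborFinset w,
        φ j ∈ (H.neighborFinset w) ×ˢ (K.neighborFinset w) := by
      intro j hj
      rw [SimpleGraph.mem_neighborFinset] at hj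
      have s1 := (aux_walk_exists G H K hfac hj).choose_spec
      have s2 := (aux_walk_exists G H K hfac hj.symm).choose_spec
      simp only [hφ, dif_pos hj, Finset.mem_product, SimpleGraph.mem_neighborFinset]
      exact ⟨s1.1, s2.2.symm⟩
    have hinj : Set.InjOn φ (G.neighborFinset w) := by
      intro j hj j' hj' heq
      simp only [Finset.mem_coe, SimpleGraph.mem_neighborFinset] at hj hj'
      have hj1 : G.Adj w j := hj
      have hj1' : G.Adj w j' := hj'
      simp only [hφ, dif_pos hj1, dif_pos hj1', Prod.mk.injEq] at heq
      have s1 := (aux_walk_exists G H K hfac hj1).choose_spec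
      have s2 := (aux_walk_exists G H K hfac hj1.symm).choose_spec
      have s1' := (aux_walk_exists G H K hfac hj1').choose_spec
      have s2' := (aux_walk_exists G H K hfac hj1'.symm).choose_spec
      set k0 := (aux_walk_exists G H K hfac hj1).choose
      set m0 := (aux_walk_exists G H K hfac hj1.symm).choose
      -- j and j' are both H-adjacent to m0 and K-adjacent to k0
      exact aux_walk_unique G H K hfac s2.1.symm s1.2.symm
        (heq.2 ▸ s2'.1.symm) (heq.1 ▸ s1'.2.symm)
    have hcard := Finset.card_le_card_of_injOn φ hmaps hinj
    rwa [Finset.card_product, ← SimpleGraph.degree, ← SimpleGraph.degree,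
      ← SimpleGraph.degree] at hcard
  -- global sum equality (over ℝ)
  have hsym : ∀ (w k : Fin n), H.adjMatrix ℝ w k = H.adjMatrix ℝ k w := by
    intro w k
    by_cases h : H.Adj w k
    · simp [h, h.symm]
    · have h' : ¬ H.Adj k w := fun hh => h hh.symm
      simp [h, h']
  have hsumR : ∑ w, (G.degree w : ℝ) = ∑ w, (H.degree w : ℝ) * (K.degree w : ℝ) := by
    calc ∑ w, (G.degree w : ℝ)
        = ∑ w, ∑ j, G.adjMatrix ℝ w j := by
          exact Finset.sum_congr rfl fun w _ => aux_deg_sum G w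
      _ = ∑ w, ∑ j, ∑ k, H.adjMatrix ℝ w k * K.adjMatrix ℝ k j := by
          exact Finset.sum_congr rfl fun w _ =>
            Finset.sum_congr rfl fun j _ => aux_entry G H K hfac w j
      _ = ∑ w, ∑ k, H.adjMatrix ℝ w k * ∑ j, K.adjMatrix ℝ k j := by
          refine Finset.sum_congr rfl fun w _ => ?_
          rw [Finset.sum_comm]
          exact Finset.sum_congr rfl fun k _ => (Finset.mul_sum _ _ _).symm
      _ = ∑ k, (∑ w, H.adjMatrix ℝ w k) * ∑ j, K.adjMatrix ℝ k j := by
          rw [Finset.sum_comm]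
          exact Finset.sum_congr rfl fun k _ => (Finset.sum_mul _ _ _).symm
      _ = ∑ k, (H.degree k : ℝ) * (K.degree k : ℝ) := by
          refine Finset.sum_congr rfl fun k _ => ?_
          rw [← aux_deg_sum K k]
          congr 1
          rw [aux_deg_sum H k]
          exact Finset.sum_congr rfl fun w _ => hsym w k
  have hsumN : ∑ w, G.degree w = ∑ w, H.degree w * K.degree w := by
    exact_mod_cast hsumR
  exact (Finset.sum_eq_sum_iff_of_le fun i _ => hle i).mp hsumN v (Finset.mem_univ v)
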